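/- Azuma–Hoeffding inequality for sub-Gaussian martingale difference sequences: let {ε_t}_{t∈ℕ} be a real-valued martingale difference sequence adapted to a filtration {F_t}_{t≥0} (i.e., E[ε_t | F_{t-1}] = 0 a.s. for each t), and suppose for each t there is a constant d_t > 0 with E[exp(ε_t²/d_t²) | F_{t-1}] ≤ e a.s. Then for every p > 0 and T ∈ ℕ, Pr{ Σ_{t=1}^{T-1} ε_t > p (Σ_{t=1}^{T-1} d_t²)^{1/2} } ≤ exp(-p²/4). -/

import Mathlib

open MeasureTheory ENNReal

/-- `e^u ≤ u + e^(u²)` for all real `u`. -/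
lemma exp_le_add_exp_sq (u : ℝ) : Real.exp u ≤ u + Real.exp (u ^ 2) := by
  rcases le_or_gt |u| 1 with h1 | h1
  · have hb := Real.exp_bound h1 (n := 2) (by norm_num)
    have hsum : (∑ m ∈ Finset.range 2, u ^ m / m.factorial) = 1 + u := by
      simp [Finset.sum_range_succ]
    rw [hsum] at hb
    have h2 : Real.exp u - (1 + u) ≤ u ^ 2 * (3 / 4) := by
      have := (abs_sub_le_iff.1 hb).1
      calc Real.exp u - (1 + u) ≤ |u| ^ 2 * ((2 : ℕ).succ / ((2 : ℕ).factorial * 2)) := this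
        _ = u ^ 2 * (3 / 4) := by rw [sq_abs]; norm_num
    have h3 : u ^ 2 + 1 ≤ Real.exp (u ^ 2) := Real.add_one_le_exp _
    nlinarith [sq_nonneg u]
  · rcases le_or_gt 0 u with hu | hu
    · have h2 : u ≤ u ^ 2 := by nlinarith [abs_of_nonneg hu ▸ h1]
      have h3 := Real.exp_le_exp.2 h2
      linarith
    · have hu1 : u < -1 := by rw [abs_of_neg hu] at h1; linarith
      have h2 : Real.exp u ≤ 1 := Real.exp_le_one_iff.2 hu.le
      have h3 : u ^ 2 + 1 ≤ Real.exp (u ^ 2) := Real.add_one_le_exp _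
      nlinarith

/-- Young-type inequality. -/
lemma young_aux {n : ℝ} (a b : ℝ) (hn : 0 < n) : a * b ≤ n * a ^ 2 / 4 + b ^ 2 / n := by
  rw [div_add_div _ _ (by norm_num : (4:ℝ) ≠ 0) hn.ne', le_div_iff₀ (by positivity)]
  nlinarith [sq_nonneg (n * a - 2 * b)]

/-- Conditional mgf bound for a sub-Gaussian martingale difference. -/
lemma condexp_exp_le
    {Ω : Type*} {m0 : MeasurableSpace Ω} {μ : Measure Ω} [IsProbabilityMeasure μ]
    {m : MeasurableSpace Ω} (hm : m ≤ m0)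
    {X : Ω → ℝ} {δ : ℝ} (hδ : 0 < δ)
    (hXint : Integrable X μ)
    (hmds : μ[X | m] =ᵐ[μ] 0)
    (hY : Integrable (fun ω => Real.exp (X ω ^ 2 / δ ^ 2)) μ)
    (hsubg : ∀ᵐ ω ∂μ, (μ[fun ω' => Real.exp (X ω' ^ 2 / δ ^ 2) | m]) ω ≤ Real.exp 1)
    (l : ℝ) :
    Integrable (fun ω => Real.exp (l * X ω)) μ ∧
      ∀ᵐ ω ∂μ, (μ[fun ω => Real.exp (l * X ω) | m]) ω ≤ Real.exp (l ^ 2 * δ ^ 2) := by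
  obtain ⟨c₁, c₂, c₃, hc₂, hpt, hsum⟩ :
      ∃ c₁ c₂ c₃ : ℝ, 0 ≤ c₂ ∧
        (∀ x : ℝ, Real.exp (l * x) ≤ c₁ * x + c₂ * Real.exp (x ^ 2 / δ ^ 2) + c₃) ∧
        c₂ * Real.exp 1 + c₃ ≤ Real.exp (l ^ 2 * δ ^ 2) := by
    rcases le_or_gt (l ^ 2 * δ ^ 2) 1 with hθ | hθ
    · set θ := l ^ 2 * δ ^ 2 with hθdef
      have hθ0 : 0 ≤ θ := by positivity
      refine ⟨l, θ * Real.exp (θ - 1), (1 - θ) * Real.exp θ, by positivity, fun x => ?_, ?_⟩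
      · have h1 : Real.exp (l * x) ≤ l * x + Real.exp ((l * x) ^ 2) := exp_le_add_exp_sq _
        have h2 : (l * x) ^ 2 = x ^ 2 / δ ^ 2 * θ := by
          rw [hθdef]; field_simp
        have h3 : Real.exp ((l * x) ^ 2) = Real.exp (x ^ 2 / δ ^ 2) ^ θ := by
          rw [h2, Real.exp_mul]
        have h4 : Real.exp (x ^ 2 / δ ^ 2) ^ θ * Real.exp 1 ^ (1 - θ)
            ≤ θ * Real.exp (x ^ 2 / δ ^ 2) + (1 - θ) * Real.exp 1 :=
          Real.geom_mean_le_arith_mean2_weighted hθ0 (by linarith)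
            (Real.exp_nonneg _) (Real.exp_nonneg _) (by ring)
        have h5 : Real.exp 1 ^ (1 - θ) = Real.exp (1 - θ) := Real.exp_one_rpow _
        rw [h5] at h4
        have h6 := mul_le_mul_of_nonneg_right h4 (Real.exp_pos (θ - 1)).le
        have h7 : Real.exp (x ^ 2 / δ ^ 2) ^ θ * Real.exp (1 - θ) * Real.exp (θ - 1)
            = Real.exp (x ^ 2 / δ ^ 2) ^ θ := by
          rw [mul_assoc, ← Real.exp_add]
          norm_num
        rw [h7] at h6
        have h8 : (θ * Real.exp (x ^ 2 / δ ^ 2) + (1 - θ) * Real.exp 1) * Real.exp (θ - 1)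
            = θ * Real.exp (θ - 1) * Real.exp (x ^ 2 / δ ^ 2) + (1 - θ) * Real.exp θ := by
          have : Real.exp 1 * Real.exp (θ - 1) = Real.exp θ := by
            rw [← Real.exp_add]; norm_num
          calc (θ * Real.exp (x ^ 2 / δ ^ 2) + (1 - θ) * Real.exp 1) * Real.exp (θ - 1)
              = θ * Real.exp (θ - 1) * Real.exp (x ^ 2 / δ ^ 2)
                + (1 - θ) * (Real.exp 1 * Real.exp (θ - 1)) := by ring
            _ = _ := by rw [this]
        rw [h8] at h6
        calc Real.exp (l * x) ≤ l * x + Real.exp ((l * x) ^ 2) := h1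
          _ = l * x + Real.exp (x ^ 2 / δ ^ 2) ^ θ := by rw [h3]
          _ ≤ l * x + (θ * Real.exp (θ - 1) * Real.exp (x ^ 2 / δ ^ 2) + (1 - θ) * Real.exp θ) :=
              by linarith
          _ = _ := by ring
      · have : θ * Real.exp (θ - 1) * Real.exp 1 = θ * Real.exp θ := by
          rw [mul_assoc, ← Real.exp_add]; norm_num
        rw [this]
        exact le_of_eq (by ring)
    · -- case 1 < l² δ²
      set C := Real.exp (l ^ 2 * δ ^ 2 / 2 - 1 / 2) with hCdef
      have hC0 : 0 < C := Real.exp_pos _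
      refine ⟨0, C / 2, C / 2 * Real.exp 1, by positivity, fun x => ?_, ?_⟩
      · have hy : l * x ≤ l ^ 2 * δ ^ 2 / 2 + (x ^ 2 / δ ^ 2) / 2 := by
          have h1 : l * x = (l * δ) * (x / δ) := by field_simp
          have h2 : (x / δ) ^ 2 = x ^ 2 / δ ^ 2 := div_pow x δ 2
          nlinarith [sq_nonneg (l * δ - x / δ)]
        have h3 : Real.exp (l * x) ≤ Real.exp (l ^ 2 * δ ^ 2 / 2) *
            Real.exp (x ^ 2 / δ ^ 2 * (1 / 2)) := by
          rw [← Real.exp_add]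
          apply Real.exp_le_exp.2
          linarith
        have h4 : Real.exp (x ^ 2 / δ ^ 2 * (1 / 2)) = Real.exp (x ^ 2 / δ ^ 2) ^ ((1:ℝ)/2) :=
          Real.exp_mul _ _
        have h5 : Real.exp (x ^ 2 / δ ^ 2) ^ ((1:ℝ)/2) * Real.exp 1 ^ ((1:ℝ)/2)
            ≤ (1/2) * Real.exp (x ^ 2 / δ ^ 2) + (1/2) * Real.exp 1 :=
          Real.geom_mean_le_arith_mean2_weighted (by norm_num) (by norm_num)
            (Real.exp_nonneg _) (Real.exp_nonneg _) (by norm_num)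
        have h6 : Real.exp 1 ^ ((1:ℝ)/2) = Real.exp (1/2) := by
          rw [Real.exp_one_rpow]
        rw [h6] at h5
        have h7 := mul_le_mul_of_nonneg_right h5 (Real.exp_pos (-(1/2))).le
        have h8 : Real.exp (x ^ 2 / δ ^ 2) ^ ((1:ℝ)/2) * Real.exp (1/2) * Real.exp (-(1/2))
            = Real.exp (x ^ 2 / δ ^ 2) ^ ((1:ℝ)/2) := by
          rw [mul_assoc, ← Real.exp_add]; norm_num
        rw [h8] at h7
        have h9 : Real.exp (l ^ 2 * δ ^ 2 / 2) * Real.exp (-(1/2)) = C := by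
          rw [hCdef, ← Real.exp_add]
          exact congrArg Real.exp (by ring)
        calc Real.exp (l * x)
            ≤ Real.exp (l ^ 2 * δ ^ 2 / 2) * Real.exp (x ^ 2 / δ ^ 2 * (1 / 2)) := h3
          _ = Real.exp (l ^ 2 * δ ^ 2 / 2) * Real.exp (x ^ 2 / δ ^ 2) ^ ((1:ℝ)/2) := by rw [h4]
          _ ≤ Real.exp (l ^ 2 * δ ^ 2 / 2) *
              (((1:ℝ)/2 * Real.exp (x ^ 2 / δ ^ 2) + 1/2 * Real.exp 1) * Real.exp (-(1/2))) := by
              apply mul_le_mul_of_nonneg_left h7 (Real.exp_pos _).le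
          _ = (Real.exp (l ^ 2 * δ ^ 2 / 2) * Real.exp (-(1/2))) *
              ((1:ℝ)/2 * Real.exp (x ^ 2 / δ ^ 2) + 1/2 * Real.exp 1) := by ring
          _ = C * ((1:ℝ)/2 * Real.exp (x ^ 2 / δ ^ 2) + 1/2 * Real.exp 1) := by rw [h9]
          _ = 0 * x + C / 2 * Real.exp (x ^ 2 / δ ^ 2) + C / 2 * Real.exp 1 := by ring
      · have h1 : C / 2 * Real.exp 1 + C / 2 * Real.exp 1 = C * Real.exp 1 := by ring
        rw [h1]
        have h2 : C * Real.exp 1 = Real.exp (l ^ 2 * δ ^ 2 / 2 + 1 / 2) := by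
          rw [hCdef, ← Real.exp_add]; congr 1; ring
        rw [h2]
        apply Real.exp_le_exp.2
        linarith
  -- main argument
  set Y : Ω → ℝ := fun ω => Real.exp (X ω ^ 2 / δ ^ 2) with hYdef
  set g : Ω → ℝ := c₁ • X + c₂ • Y + (fun _ => c₃) with hgdef
  have hpt' : ∀ ω, Real.exp (l * X ω) ≤ g ω := fun ω => by
    simpa [hgdef, smul_eq_mul] using hpt (X ω)
  have hgint : Integrable g μ := ((hXint.smul c₁).add (hY.smul c₂)).add (integrable_const c₃)
  have hEm : AEStronglyMeasurable[m0] (fun ω => Real.exp (l * X ω)) μ :=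
    Real.continuous_exp.comp_aestronglyMeasurable (hXint.aestronglyMeasurable.const_mul l)
  have hEint : Integrable (fun ω => Real.exp (l * X ω)) μ := by
    refine hgint.mono' hEm (Filter.Eventually.of_forall fun ω => ?_)
    rw [Real.norm_eq_abs, abs_of_pos (Real.exp_pos _)]
    exact hpt' ω
  refine ⟨hEint, ?_⟩
  have hmono := condExp_mono (m := m) hEint hgint (Filter.Eventually.of_forall hpt')
  have hA := condExp_add (μ := μ) (m := m) ((hXint.smul c₁).add (hY.smul c₂))
    (integrable_const (c₃ : ℝ))
  have hB := condExp_add (μ := μ) (m := m) (hXint.smul c₁) (hY.smul c₂)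
  have hC1 := condExp_smul (μ := μ) (m := m) c₁ X
  have hC2 := condExp_smul (μ := μ) (m := m) c₂ Y
  filter_upwards [hmono, hA, hB, hC1, hC2, hmds, hsubg] with ω h0 h1 h2 h3 h4 h5 h6
  have hconst : (μ[(fun _ => c₃ : Ω → ℝ)|m]) ω = c₃ := by
    rw [condExp_const hm]
  have hgc : (μ[g|m]) ω = c₁ * (μ[X|m]) ω + c₂ * (μ[Y|m]) ω + c₃ := by
    rw [hgdef] at *
    rw [h1, Pi.add_apply, h2, Pi.add_apply, h3, h4, hconst, Pi.smul_apply, Pi.smul_apply,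
      smul_eq_mul, smul_eq_mul]
  have h5' : (μ[X|m]) ω = 0 := h5
  have h6' : c₂ * (μ[Y|m]) ω ≤ c₂ * Real.exp 1 := mul_le_mul_of_nonneg_left h6 hc₂
  calc (μ[fun ω => Real.exp (l * X ω)|m]) ω ≤ (μ[g|m]) ω := h0
    _ = c₁ * (μ[X|m]) ω + c₂ * (μ[Y|m]) ω + c₃ := hgc
    _ = c₂ * (μ[Y|m]) ω + c₃ := by rw [h5']; ring
    _ ≤ c₂ * Real.exp 1 + c₃ := by linarith
    _ ≤ Real.exp (l ^ 2 * δ ^ 2) := hsum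

/-- Integrability of `exp` of the scaled partial sums. -/
lemma integrable_exp_sum_aux
    {Ω : Type*} {m0 : MeasurableSpace Ω} {μ : Measure Ω} [IsProbabilityMeasure μ]
    (ε : ℕ → Ω → ℝ) (d : ℕ → ℝ)
    (hd : ∀ t, 1 ≤ t → 0 < d t)
    (hint : ∀ t, 1 ≤ t → Integrable (ε t) μ)
    (hexp_int : ∀ t, 1 ≤ t → Integrable (fun ω => Real.exp ((ε t ω) ^ 2 / (d t) ^ 2)) μ)
    (l : ℝ) (n : ℕ) :
    Integrable (fun ω => Real.exp (l * ∑ t ∈ Finset.Icc 1 n, ε t ω)) μ := by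
  rcases Nat.eq_zero_or_pos n with hn | hn
  · subst hn
    simp only [show Finset.Icc 1 0 = (∅ : Finset ℕ) by rfl, Finset.sum_empty, mul_zero,
      Real.exp_zero]
    exact integrable_const 1
  have hn' : (0:ℝ) < n := by exact_mod_cast hn
  have hcard : (Finset.Icc 1 n).card = n := by
    rw [Nat.card_Icc]; omega
  have hmemt : ∀ t ∈ Finset.Icc 1 n, 1 ≤ t := fun t ht => (Finset.mem_Icc.1 ht).1
  -- dominating function
  set g : Ω → ℝ := fun ω => Real.exp ((n:ℝ) * l ^ 2 * (∑ t ∈ Finset.Icc 1 n, d t ^ 2) / 4) *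
      ∑ t ∈ Finset.Icc 1 n, (1 / (n:ℝ)) * Real.exp (ε t ω ^ 2 / d t ^ 2) with hgdef
  have hgint : Integrable g μ := by
    apply Integrable.const_mul
    exact integrable_finset_sum _ fun t ht => ((hexp_int t (hmemt t ht)).const_mul _)
  have hSm : AEStronglyMeasurable (fun ω => ∑ t ∈ Finset.Icc 1 n, ε t ω) μ := by
    apply Finset.aestronglyMeasurable_fun_sum
    exact fun t ht => (hint t (hmemt t ht)).aestronglyMeasurable
  have hEm : AEStronglyMeasurable (fun ω => Real.exp (l * ∑ t ∈ Finset.Icc 1 n, ε t ω)) μ :=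
    Real.continuous_exp.comp_aestronglyMeasurable (hSm.const_mul l)
  refine hgint.mono' hEm (Filter.Eventually.of_forall fun ω => ?_)
  rw [Real.norm_eq_abs, abs_of_pos (Real.exp_pos _)]
  -- pointwise bound
  have h1 : l * ∑ t ∈ Finset.Icc 1 n, ε t ω
      ≤ ∑ t ∈ Finset.Icc 1 n, ((n:ℝ) * (l * d t) ^ 2 / 4 + (ε t ω / d t) ^ 2 / n) := by
    rw [Finset.mul_sum]
    apply Finset.sum_le_sum
    intro t ht
    have hdt := hd t (hmemt t ht)
    have : l * ε t ω = (l * d t) * (ε t ω / d t) := by field_simp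
    rw [this]
    exact young_aux _ _ hn'
  have h2 : ∑ t ∈ Finset.Icc 1 n, ((n:ℝ) * (l * d t) ^ 2 / 4 + (ε t ω / d t) ^ 2 / n)
      = (n:ℝ) * l ^ 2 * (∑ t ∈ Finset.Icc 1 n, d t ^ 2) / 4
        + ∑ t ∈ Finset.Icc 1 n, (ε t ω ^ 2 / d t ^ 2) * (1 / (n:ℝ)) := by
    rw [Finset.sum_add_distrib]
    congr 1
    · rw [Finset.mul_sum, Finset.sum_div]
      apply Finset.sum_congr rfl
      intro t ht
      ring
    · apply Finset.sum_congr rfl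
      intro t ht
      rw [div_pow]
      ring
  have h3 : Real.exp (∑ t ∈ Finset.Icc 1 n, (ε t ω ^ 2 / d t ^ 2) * (1 / (n:ℝ)))
      ≤ ∑ t ∈ Finset.Icc 1 n, (1 / (n:ℝ)) * Real.exp (ε t ω ^ 2 / d t ^ 2) := by
    have h4 : Real.exp (∑ t ∈ Finset.Icc 1 n, (ε t ω ^ 2 / d t ^ 2) * (1 / (n:ℝ)))
        = ∏ t ∈ Finset.Icc 1 n, Real.exp (ε t ω ^ 2 / d t ^ 2) ^ ((1:ℝ) / n) := by
      rw [Real.exp_sum]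
      apply Finset.prod_congr rfl
      intro t ht
      rw [Real.exp_mul]
    rw [h4]
    apply Real.geom_mean_le_arith_mean_weighted
    · intro i _; positivity
    · rw [Finset.sum_const, hcard, nsmul_eq_mul]
      field_simp
    · intro i _; exact Real.exp_nonneg _
  calc Real.exp (l * ∑ t ∈ Finset.Icc 1 n, ε t ω)
      ≤ Real.exp ((n:ℝ) * l ^ 2 * (∑ t ∈ Finset.Icc 1 n, d t ^ 2) / 4
        + ∑ t ∈ Finset.Icc 1 n, (ε t ω ^ 2 / d t ^ 2) * (1 / (n:ℝ))) := by
        apply Real.exp_le_exp.2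
        rw [← h2]
        exact h1
    _ = Real.exp ((n:ℝ) * l ^ 2 * (∑ t ∈ Finset.Icc 1 n, d t ^ 2) / 4) *
        Real.exp (∑ t ∈ Finset.Icc 1 n, (ε t ω ^ 2 / d t ^ 2) * (1 / (n:ℝ))) := Real.exp_add _ _
    _ ≤ g ω := by
        rw [hgdef]
        exact mul_le_mul_of_nonneg_left h3 (Real.exp_pos _).le

theorem azuma_hoeffding_subgaussian_mds
    {Ω : Type*} {m0 : MeasurableSpace Ω} (μ : Measure Ω) [IsProbabilityMeasure μ]
    (F : Filtration ℕ m0)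
    (ε : ℕ → Ω → ℝ) (d : ℕ → ℝ)
    (hd : ∀ t, 1 ≤ t → 0 < d t)
    (hadapted : ∀ t, 1 ≤ t → StronglyMeasurable[F t] (ε t))
    (hint : ∀ t, 1 ≤ t → Integrable (ε t) μ)
    (hmds : ∀ t, 1 ≤ t → μ[ε t | F (t - 1)] =ᵐ[μ] 0)
    (hexp_int : ∀ t, 1 ≤ t → Integrable (fun ω => Real.exp ((ε t ω) ^ 2 / (d t) ^ 2)) μ)
    (hsubg : ∀ t, 1 ≤ t →
      ∀ᵐ ω ∂μ, (μ[fun ω' => Real.exp ((ε t ω') ^ 2 / (d t) ^ 2) | F (t - 1)]) ω ≤ Real.exp 1) :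
    ∀ p : ℝ, 0 < p → ∀ T : ℕ,
      μ {ω | p * Real.sqrt (∑ t ∈ Finset.Icc 1 (T - 1), (d t) ^ 2)
              < ∑ t ∈ Finset.Icc 1 (T - 1), ε t ω}
        ≤ ENNReal.ofReal (Real.exp (-(p ^ 2) / 4)) := by
  -- key integral bound by induction
  have key : ∀ l : ℝ, ∀ n : ℕ,
      ∫ ω, Real.exp (l * ∑ t ∈ Finset.Icc 1 n, ε t ω) ∂μ
        ≤ Real.exp (l ^ 2 * ∑ t ∈ Finset.Icc 1 n, d t ^ 2) := by
    intro l n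
    induction n with
    | zero =>
      simp only [show Finset.Icc 1 0 = (∅ : Finset ℕ) by rfl, Finset.sum_empty, mul_zero,
        Real.exp_zero, integral_const, measure_univ, ENNReal.toReal_one, probReal_univ, smul_eq_mul, one_mul]
      exact le_refl 1
    | succ n ih =>
      have hIcc : Finset.Icc 1 (n + 1) = insert (n + 1) (Finset.Icc 1 n) := by
        ext x; simp only [Finset.mem_Icc, Finset.mem_insert]; omega
      have hnot : (n + 1) ∉ Finset.Icc 1 n := by simp
      have hSsum : ∀ ω, ∑ t ∈ Finset.Icc 1 (n+1), ε t ω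
          = ε (n+1) ω + ∑ t ∈ Finset.Icc 1 n, ε t ω := by
        intro ω; rw [hIcc, Finset.sum_insert hnot]
      have hdsum : ∑ t ∈ Finset.Icc 1 (n+1), d t ^ 2
          = d (n+1) ^ 2 + ∑ t ∈ Finset.Icc 1 n, d t ^ 2 := by
        rw [hIcc, Finset.sum_insert hnot]
      -- conditional bound for increment
      have hone : 1 ≤ n + 1 := Nat.le_add_left 1 n
      obtain ⟨hgint, hgcond⟩ := condexp_exp_le (μ := μ) (m := F n) (F.le n)
        (hd (n+1) hone) (hint (n+1) hone) (hmds (n+1) hone) (hexp_int (n+1) hone)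
        (hsubg (n+1) hone) l
      set f : Ω → ℝ := fun ω => Real.exp (l * ∑ t ∈ Finset.Icc 1 n, ε t ω) with hfdef
      set g : Ω → ℝ := fun ω => Real.exp (l * ε (n+1) ω) with hg'def
      have hfSM : StronglyMeasurable[F n] f := by
        apply Continuous.comp_stronglyMeasurable Real.continuous_exp
        apply StronglyMeasurable.const_mul
        apply Finset.stronglyMeasurable_fun_sum
        intro t ht
        exact (hadapted t (Finset.mem_Icc.1 ht).1).mono (F.mono (Finset.mem_Icc.1 ht).2)
      have hfint : Integrable f μ :=
        integrable_exp_sum_aux ε d hd hint hexp_int l n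
      have hfgeq : (fun ω => Real.exp (l * ∑ t ∈ Finset.Icc 1 (n+1), ε t ω)) = f * g := by
        funext ω
        rw [Pi.mul_apply, hfdef, hg'def, ← Real.exp_add, hSsum ω]
        ring_nf
      have hfgint : Integrable (f * g) μ := by
        rw [← hfgeq]
        exact integrable_exp_sum_aux ε d hd hint hexp_int l (n+1)
      have hpull : μ[f * g | F n] =ᵐ[μ] f * μ[g | F n] :=
        condExp_mul_of_stronglyMeasurable_left hfSM hfgint hgint
      have hf_nonneg : ∀ ω, 0 ≤ f ω := fun ω => (Real.exp_pos _).le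
      have hcond_nonneg : 0 ≤ᵐ[μ] μ[g | F n] :=
        condExp_nonneg (Filter.Eventually.of_forall fun ω => (Real.exp_pos _).le)
      set K := Real.exp (l ^ 2 * d (n+1) ^ 2) with hKdef
      have hK0 : 0 < K := Real.exp_pos _
      have hfcond_int : Integrable (fun ω => f ω * (μ[g | F n]) ω) μ := by
        refine (hfint.const_mul K).mono'
          (hfint.aestronglyMeasurable.mul
            ((stronglyMeasurable_condExp.mono (F.le n)).aestronglyMeasurable))
          ?_
        filter_upwards [hgcond, hcond_nonneg] with ω h1 h2
        rw [Real.norm_eq_abs, abs_of_nonneg (mul_nonneg (hf_nonneg ω) h2)]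
        calc f ω * (μ[g | F n]) ω ≤ f ω * K :=
              mul_le_mul_of_nonneg_left h1 (hf_nonneg ω)
          _ = K * f ω := by ring
      calc ∫ ω, Real.exp (l * ∑ t ∈ Finset.Icc 1 (n+1), ε t ω) ∂μ
          = ∫ ω, (f * g) ω ∂μ := by rw [hfgeq]
        _ = ∫ ω, (μ[f * g | F n]) ω ∂μ := (integral_condExp (F.le n)).symm
        _ = ∫ ω, f ω * (μ[g | F n]) ω ∂μ := integral_congr_ae hpull
        _ ≤ ∫ ω, K * f ω ∂μ := by
            apply integral_mono_ae hfcond_int (hfint.const_mul K)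
            filter_upwards [hgcond] with ω h1
            calc f ω * (μ[g | F n]) ω ≤ f ω * K :=
                  mul_le_mul_of_nonneg_left h1 (hf_nonneg ω)
              _ = K * f ω := by ring
        _ = K * ∫ ω, f ω ∂μ := integral_const_mul K _
        _ ≤ K * Real.exp (l ^ 2 * ∑ t ∈ Finset.Icc 1 n, d t ^ 2) := by
            apply mul_le_mul_of_nonneg_left ih hK0.le
        _ = Real.exp (l ^ 2 * ∑ t ∈ Finset.Icc 1 (n+1), d t ^ 2) := by
            rw [hKdef, ← Real.exp_add, hdsum]; ring_nf
  -- Chernoff argument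
  intro p hp T
  set n := T - 1 with hndef
  rcases Nat.eq_zero_or_pos n with hn | hn
  · rw [hn]
    have hempty : Finset.Icc 1 0 = (∅ : Finset ℕ) := rfl
    have : {ω : Ω | p * Real.sqrt (∑ t ∈ Finset.Icc 1 0, (d t) ^ 2)
        < ∑ t ∈ Finset.Icc 1 0, ε t ω} = ∅ := by
      ext ω
      simp [hempty]
    rw [this]
    simp
  · have hSpos : 0 < ∑ t ∈ Finset.Icc 1 n, d t ^ 2 := by
      apply Finset.sum_pos
      · intro t ht
        exact pow_pos (hd t (Finset.mem_Icc.1 ht).1) 2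
      · exact ⟨1, Finset.mem_Icc.2 ⟨le_refl 1, hn⟩⟩
    set Sd := ∑ t ∈ Finset.Icc 1 n, d t ^ 2 with hSdef
    set R := Real.sqrt Sd with hRdef
    have hR0 : 0 < R := Real.sqrt_pos.2 hSpos
    have hR2 : R ^ 2 = Sd := Real.sq_sqrt hSpos.le
    set l := p / (2 * R) with hldef
    have hl0 : 0 < l := by positivity
    set X : Ω → ℝ := fun ω => ∑ t ∈ Finset.Icc 1 n, ε t ω with hXdef
    have h_int : Integrable (fun ω => Real.exp (l * X ω)) μ :=
      integrable_exp_sum_aux ε d hd hint hexp_int l n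
    have hchern := ProbabilityTheory.measure_ge_le_exp_mul_mgf (μ := μ) (X := X)
      (p * R) hl0.le h_int
    have hmgf : ProbabilityTheory.mgf X μ l ≤ Real.exp (l ^ 2 * Sd) := key l n
    have hcalc : Real.exp (-l * (p * R)) * Real.exp (l ^ 2 * Sd) = Real.exp (-(p ^ 2) / 4) := by
      rw [← Real.exp_add]
      congr 1
      rw [← hR2, hldef]
      field_simp
      ring
    have hbound : (μ {ω | p * R ≤ X ω}).toReal ≤ Real.exp (-(p ^ 2) / 4) := by
      calc (μ {ω | p * R ≤ X ω}).toReal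
          ≤ Real.exp (-l * (p * R)) * ProbabilityTheory.mgf X μ l := hchern
        _ ≤ Real.exp (-l * (p * R)) * Real.exp (l ^ 2 * Sd) :=
            mul_le_mul_of_nonneg_left hmgf (Real.exp_pos _).le
        _ = Real.exp (-(p ^ 2) / 4) := hcalc
    calc μ {ω | p * Real.sqrt Sd < X ω}
        ≤ μ {ω | p * R ≤ X ω} := by
          apply measure_mono
          intro ω hω
          simp only [Set.mem_setOf_eq] at hω ⊢
          exact le_of_lt hω
      _ = ENNReal.ofReal ((μ {ω | p * R ≤ X ω}).toReal) := by
          rw [ENNReal.ofReal_toReal (measure_ne_top μ _)]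
      _ ≤ ENNReal.ofReal (Real.exp (-(p ^ 2) / 4)) := ENNReal.ofReal_le_ofReal hbound
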